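/- If f : [a,b] → ℝ has absolutely continuous (n-1)st derivative with f^{(n)} ∈ L^∞([a,b]), then with φ_n(x) = ((b-a)/2)^n 2^{-n} U_n((2x-a-b)/(b-a)), the quadrature error satisfies |E_n(f)| ≤ ‖f^{(n)}‖_∞ (b-a)^{n+1} / (2^{2n} n!). -/

import Mathlib

open MeasureTheory Polynomial intervalIntegral
open scoped ENNReal

lemma abs_sin_periodic : Function.Periodic (fun x => |Real.sin x|) Real.pi := by
  intro x
  simp [Real.sin_add, abs_neg]

lemma integral_abs_sin_nat (k : ℕ) :
    ∫ x in (0:ℝ)..(k * Real.pi), |Real.sin x| = 2 * k := by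
  have hint : ∀ t₁ t₂ : ℝ, IntervalIntegrable (fun x => |Real.sin x|) volume t₁ t₂ :=
    fun t₁ t₂ => (Real.continuous_sin.abs).intervalIntegrable t₁ t₂
  have h := abs_sin_periodic.intervalIntegral_add_zsmul_eq (k : ℤ) 0 hint
  have h1 : ∫ x in (0:ℝ)..Real.pi, |Real.sin x| = 2 := by
    rw [intervalIntegral.integral_congr (g := Real.sin)]
    · norm_num [integral_sin]
    · intro x hx
      rw [Set.uIcc_of_le Real.pi_pos.le] at hx
      exact abs_of_nonneg (Real.sin_nonneg_of_mem_Icc hx)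
  simp only [zero_add, zsmul_eq_mul, Int.cast_natCast] at h
  rw [h, h1]
  ring

lemma integral_abs_sin_mul (n : ℕ) :
    ∫ θ in (0:ℝ)..Real.pi, |Real.sin ((n + 1) * θ)| = 2 := by
  have hc : ((n : ℝ) + 1) ≠ 0 := by positivity
  rw [intervalIntegral.integral_comp_mul_left (fun x => |Real.sin x|) hc]
  rw [mul_zero]
  have := integral_abs_sin_nat (n + 1)
  push_cast at this
  rw [this]
  rw [smul_eq_mul]
  field_simp

lemma integral_abs_U (a b : ℝ) (hab : a < b) (n : ℕ) :
    ∫ x in a..b, |(Polynomial.Chebyshev.U ℝ n).eval ((2 * x - a - b) / (b - a))| = b - a := by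
  have hba : b - a ≠ 0 := sub_ne_zero.2 hab.ne'
  set G : ℝ → ℝ := fun x => |(Polynomial.Chebyshev.U ℝ n).eval ((2 * x - a - b) / (b - a))| with hG
  have hGcont : Continuous G := by
    apply Continuous.abs
    exact (Polynomial.Chebyshev.U ℝ n).continuous_aeval.comp
      (by continuity) |>.congr (fun x => rfl)
  set X : ℝ → ℝ := fun θ => (a + b) / 2 + (b - a) / 2 * Real.cos θ with hX
  have hXderiv : ∀ θ : ℝ, HasDerivAt X (-((b - a) / 2) * Real.sin θ) θ := by
    intro θ
    have := (Real.hasDerivAt_cos θ).const_mul ((b - a) / 2)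
    have h2 := this.const_add ((a + b) / 2)
    rw [show -((b - a) / 2) * Real.sin θ = (b - a) / 2 * -Real.sin θ by ring]
    exact h2
  have hXa : X Real.pi = a := by simp [hX]; ring
  have hXb : X 0 = b := by simp [hX]; ring
  have hsub := intervalIntegral.integral_comp_smul_deriv
    (a := Real.pi) (b := 0) (f := X) (f' := fun θ => -((b - a) / 2) * Real.sin θ) (g := G)
    (fun θ _ => hXderiv θ)
    (by fun_prop)
    hGcont
  rw [hXa, hXb] at hsub
  rw [← hsub]
  have hcos : ∀ θ : ℝ, (2 * X θ - a - b) / (b - a) = Real.cos θ := by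
    intro θ
    rw [hX]
    field_simp
    ring
  have hcongr : ∫ θ in (0:ℝ)..Real.pi, |Real.sin ((n + 1) * θ)| * ((b - a) / 2)
      = ∫ θ in Real.pi..(0:ℝ), (-((b - a) / 2) * Real.sin θ) • (G ∘ X) θ := by
    rw [intervalIntegral.integral_symm, ← intervalIntegral.integral_neg]
    apply intervalIntegral.integral_congr
    intro θ hθ
    rw [Set.uIcc_comm, Set.uIcc_of_le Real.pi_pos.le] at hθ
    have hsin : 0 ≤ Real.sin θ := Real.sin_nonneg_of_mem_Icc hθ
    simp only [Function.comp, smul_eq_mul, hG, hcos, neg_mul, neg_neg]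
    have hU : (Polynomial.Chebyshev.U ℝ n).eval (Real.cos θ) * Real.sin θ
        = Real.sin (((n : ℤ) + 1) * θ) := Polynomial.Chebyshev.U_real_cos θ n
    have : |Real.sin ((↑n + 1) * θ)| = |(Polynomial.Chebyshev.U ℝ n).eval (Real.cos θ)| * Real.sin θ := by
      push_cast at hU
      rw [← hU, abs_mul, abs_of_nonneg hsin]
    rw [this]
    ring
  rw [← hcongr, intervalIntegral.integral_mul_const, integral_abs_sin_mul n]
  ring

/-- Sharp error bound for the corrected trapezoidal rule with the Chebyshev polynomial of
the second kind when `f⁽ⁿ⁾ ∈ L^∞([a,b])`. -/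
theorem corrected_trapezoid_error_chebyshevU
    (a b : ℝ) (hab : a < b) (n : ℕ) (hn : 1 ≤ n)
    (f g : ℝ → ℝ)
    (hf : ContDiffOn ℝ (n - 1 : ℕ) f (Set.Icc a b))
    (hg : IntervalIntegrable g volume a b)
    (hFTC : ∀ x ∈ Set.Icc a b,
      iteratedDeriv (n - 1) f x = iteratedDeriv (n - 1) f a + ∫ t in a..x, g t)
    (hginf : MemLp g ⊤ (volume.restrict (Set.Icc a b))) :
    |((-1 : ℝ) ^ n / n.factorial) *
        ∫ x in a..b, g x *
          (((b - a) / 2) ^ n / 2 ^ n *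
            (Polynomial.Chebyshev.U ℝ n).eval ((2 * x - a - b) / (b - a)))|
      ≤ (eLpNorm g ⊤ (volume.restrict (Set.Icc a b))).toReal * (b - a) ^ (n + 1) /
          (2 ^ (2 * n) * n.factorial) := by
  set M : ℝ := (eLpNorm g ⊤ (volume.restrict (Set.Icc a b))).toReal with hM
  have hM0 : 0 ≤ M := ENNReal.toReal_nonneg
  set C : ℝ := ((b - a) / 2) ^ n / 2 ^ n with hC
  have hC0 : 0 ≤ C := div_nonneg (pow_nonneg (by linarith) n) (by positivity)
  -- a.e. bound on g
  have hlt : eLpNormEssSup g (volume.restrict (Set.Icc a b)) < ⊤ := by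
    have := hginf.2
    rwa [eLpNorm_exponent_top] at this
  have hae : ∀ᵐ x ∂(volume.restrict (Set.Icc a b)), |g x| ≤ M := by
    filter_upwards [ae_le_eLpNormEssSup (f := g) (μ := volume.restrict (Set.Icc a b))] with x hx
    rw [hM, eLpNorm_exponent_top]
    have : (‖g x‖₊ : ℝ≥0∞).toReal ≤ (eLpNormEssSup g (volume.restrict (Set.Icc a b))).toReal :=
      ENNReal.toReal_mono hlt.ne hx
    simpa [Real.norm_eq_abs] using this
  have hae' : ∀ᵐ x ∂(volume.restrict (Set.uIoc a b)), |g x| ≤ M := by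
    apply ae_restrict_of_ae_restrict_of_subset _ hae
    rw [Set.uIoc_of_le hab.le]
    exact Set.Ioc_subset_Icc_self
  have hφcont : Continuous fun x : ℝ =>
      C * (Polynomial.Chebyshev.U ℝ n).eval ((2 * x - a - b) / (b - a)) := by
    apply Continuous.mul continuous_const
    exact (Polynomial.Chebyshev.U ℝ n).continuous_aeval.comp (by continuity) |>.congr
      (fun x => rfl)
  have key : ‖∫ x in a..b, g x *
      (C * (Polynomial.Chebyshev.U ℝ n).eval ((2 * x - a - b) / (b - a)))‖
      ≤ |∫ x in a..b, M * abs (C * (Polynomial.Chebyshev.U ℝ n).eval ((2 * x - a - b) / (b - a)))| := by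
    apply intervalIntegral.norm_integral_le_abs_of_norm_le
    · filter_upwards [hae'] with x hx
      rw [Real.norm_eq_abs, abs_mul]
      exact mul_le_mul_of_nonneg_right hx (abs_nonneg _)
    · exact (continuous_const.mul hφcont.abs).intervalIntegrable a b
  have hval : ∫ x in a..b, M * |C * (Polynomial.Chebyshev.U ℝ n).eval ((2 * x - a - b) / (b - a))|
      = M * C * (b - a) := by
    have : ∀ x : ℝ, M * |C * (Polynomial.Chebyshev.U ℝ n).eval ((2 * x - a - b) / (b - a))|
        = (M * C) * |(Polynomial.Chebyshev.U ℝ n).eval ((2 * x - a - b) / (b - a))| := by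
      intro x
      rw [abs_mul, abs_of_nonneg hC0]
      ring
    simp_rw [this]
    rw [intervalIntegral.integral_const_mul, integral_abs_U a b hab n]
  rw [abs_mul]
  have habs1 : |(-1 : ℝ) ^ n / n.factorial| = 1 / n.factorial := by
    rw [abs_div, abs_pow, abs_neg, abs_one, one_pow, abs_of_nonneg (by positivity)]
  rw [habs1]
  calc (1 / (n.factorial : ℝ)) * |∫ x in a..b, g x *
        (C * (Polynomial.Chebyshev.U ℝ n).eval ((2 * x - a - b) / (b - a)))|
      ≤ (1 / (n.factorial : ℝ)) * (M * C * (b - a)) := by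
        apply mul_le_mul_of_nonneg_left _ (by positivity)
        rw [← Real.norm_eq_abs]
        refine key.trans (le_of_eq ?_)
        rw [hval, abs_of_nonneg (mul_nonneg (mul_nonneg hM0 hC0) (by linarith))]
    _ = M * (b - a) ^ (n + 1) / (2 ^ (2 * n) * n.factorial) := by
        rw [hC]
        rw [div_pow, pow_succ, show (2:ℝ) ^ (2 * n) = 2 ^ n * 2 ^ n from by
          rw [two_mul, pow_add]]
        field_simp
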